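/- There do not exist five pairwise anti-commuting 4×4 real matrices A₁,…,A₅ all squaring to +I (i.e., a real Clifford representation of Euclidean signature (5,0) on ℝ⁴ does not exist). -/

import Mathlib

open Matrix

abbrev M4 := Matrix (Fin 4) (Fin 4) ℝ

lemma tr0_aux (P X : M4) (hP : P * P = 1) (h : P * X = -(X * P)) : X.trace = 0 := by
  have hX : X = -(P * (X * P)) := by
    have := congrArg (· * P) h
    simp only [neg_mul, mul_assoc] at this
    rw [this, hP]
    simp
  have h2 : X.trace = -X.trace := by
    conv_lhs => rw [hX]
    rw [Matrix.trace_neg, ← mul_assoc, Matrix.trace_mul_cycle, hP, one_mul]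
  linarith

lemma gram_lemma (a b c d : M4)
    (haa : a * a = 1) (hbb : b * b = 1) (hcc : c * c = 1) (hdd : d * d = 1)
    (hba : b * a = -(a * b)) (hca : c * a = -(a * c)) (hda : d * a = -(a * d))
    (hcb : c * b = -(b * c)) (hdb : d * b = -(b * d)) (hdc : d * c = -(c * d)) :
    ∀ i j : Fin 7,
      ((![a*b, a*c, a*d, b*c, b*d, c*d, a*(b*c)] i) *
       (![a*b, a*c, a*d, b*c, b*d, c*d, a*(b*c)] j)).trace
      = if i = j then (-4 : ℝ) else 0 := by
  -- right-associated rewrite lemmas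
  have haa' : ∀ X : M4, a*(a*X) = X := fun X => by rw [← mul_assoc, haa, one_mul]
  have hbb' : ∀ X : M4, b*(b*X) = X := fun X => by rw [← mul_assoc, hbb, one_mul]
  have hcc' : ∀ X : M4, c*(c*X) = X := fun X => by rw [← mul_assoc, hcc, one_mul]
  have hdd' : ∀ X : M4, d*(d*X) = X := fun X => by rw [← mul_assoc, hdd, one_mul]
  have hba' : ∀ X : M4, b*(a*X) = -(a*(b*X)) := fun X => by
    rw [← mul_assoc, hba, neg_mul, mul_assoc]
  have hca' : ∀ X : M4, c*(a*X) = -(a*(c*X)) := fun X => by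
    rw [← mul_assoc, hca, neg_mul, mul_assoc]
  have hda' : ∀ X : M4, d*(a*X) = -(a*(d*X)) := fun X => by
    rw [← mul_assoc, hda, neg_mul, mul_assoc]
  have hcb' : ∀ X : M4, c*(b*X) = -(b*(c*X)) := fun X => by
    rw [← mul_assoc, hcb, neg_mul, mul_assoc]
  have hdb' : ∀ X : M4, d*(b*X) = -(b*(d*X)) := fun X => by
    rw [← mul_assoc, hdb, neg_mul, mul_assoc]
  have hdc' : ∀ X : M4, d*(c*X) = -(c*(d*X)) := fun X => by
    rw [← mul_assoc, hdc, neg_mul, mul_assoc]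
  -- trace-zero facts
  have ta : a.trace = 0 := tr0_aux b a hbb hba
  have tb : b.trace = 0 := tr0_aux a b haa (by rw [hba, neg_neg])
  have tc : c.trace = 0 := tr0_aux a c haa (by rw [hca, neg_neg])
  have td : d.trace = 0 := tr0_aux a d haa (by rw [hda, neg_neg])
  have tab : (a*b).trace = 0 := tr0_aux a (a*b) haa (by
    simp only [mul_assoc, haa', hba', hba, mul_neg, neg_mul, neg_neg])
  have tac : (a*c).trace = 0 := tr0_aux a (a*c) haa (by
    simp only [mul_assoc, haa', hca', hca, mul_neg, neg_mul, neg_neg])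
  have tad : (a*d).trace = 0 := tr0_aux a (a*d) haa (by
    simp only [mul_assoc, haa', hda', hda, mul_neg, neg_mul, neg_neg])
  have tbc : (b*c).trace = 0 := tr0_aux b (b*c) hbb (by
    simp only [mul_assoc, hbb', hcb', hcb, mul_neg, neg_mul, neg_neg])
  have tbd : (b*d).trace = 0 := tr0_aux b (b*d) hbb (by
    simp only [mul_assoc, hbb', hdb', hdb, mul_neg, neg_mul, neg_neg])
  have tcd : (c*d).trace = 0 := tr0_aux c (c*d) hcc (by
    simp only [mul_assoc, hcc', hdc', hdc, mul_neg, neg_mul, neg_neg])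
  have tabc : (a*(b*c)).trace = 0 := tr0_aux d (a*(b*c)) hdd (by
    simp only [mul_assoc, hda', hdb', hdc', hda, hdb, hdc, mul_neg, neg_mul, neg_neg])
  have tabd : (a*(b*d)).trace = 0 := tr0_aux c (a*(b*d)) hcc (by
    simp only [mul_assoc, hca', hcb', hdc', hca, hcb, hdc, mul_neg, neg_mul, neg_neg])
  have tacd : (a*(c*d)).trace = 0 := tr0_aux b (a*(c*d)) hbb (by
    simp only [mul_assoc, hba', hcb', hdb', hba, hcb, hdb, mul_neg, neg_mul, neg_neg])
  have tbcd : (b*(c*d)).trace = 0 := tr0_aux a (b*(c*d)) haa (by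
    simp only [mul_assoc, hba', hca', hda', hba, hca, hda, mul_neg, neg_mul, neg_neg])
  have tabcd : (a*(b*(c*d))).trace = 0 := tr0_aux a (a*(b*(c*d))) haa (by
    simp only [mul_assoc, haa', hba', hca', hda', hba, hca, hda, mul_neg, neg_mul, neg_neg])
  have t1 : (1 : M4).trace = 4 := by simp [Matrix.trace_one]
  set f : Fin 7 → M4 := ![a*b, a*c, a*d, b*c, b*d, c*d, a*(b*c)] with hf
  have e0 : f ⟨0, by omega⟩ = a*b := rfl
  have e1 : f ⟨1, by omega⟩ = a*c := rfl
  have e2 : f ⟨2, by omega⟩ = a*d := rfl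
  have e3 : f ⟨3, by omega⟩ = b*c := rfl
  have e4 : f ⟨4, by omega⟩ = b*d := rfl
  have e5 : f ⟨5, by omega⟩ = c*d := rfl
  have e6 : f ⟨6, by omega⟩ = a*(b*c) := rfl
  intro i j
  fin_cases i <;> fin_cases j <;>
    simp only [e0, e1, e2, e3, e4, e5, e6] <;>
    simp [mul_assoc, haa', hbb', hcc', hdd', hba', hca', hda', hcb', hdb', hdc',
      haa, hbb, hcc, hdd, hba, hca, hda, hcb, hdb, hdc,
      ta, tb, tc, td, tab, tac, tad, tbc, tbd, tcd,
      tabc, tabd, tacd, tbcd, tabcd, t1, Fin.mk.injEq]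

noncomputable def gs : Fin 10 → M4 :=
  ![Matrix.single 0 0 1, Matrix.single 1 1 1, Matrix.single 2 2 1, Matrix.single 3 3 1,
    Matrix.single 0 1 1 + Matrix.single 1 0 1,
    Matrix.single 0 2 1 + Matrix.single 2 0 1,
    Matrix.single 0 3 1 + Matrix.single 3 0 1,
    Matrix.single 1 2 1 + Matrix.single 2 1 1,
    Matrix.single 1 3 1 + Matrix.single 3 1 1,
    Matrix.single 2 3 1 + Matrix.single 3 2 1]

lemma stdT : ∀ (i j : Fin 4), (Matrix.single i j (1:ℝ))ᵀ = Matrix.single j i 1 := by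
  intro i j
  ext r s
  simp [Matrix.single, Matrix.transpose_apply, and_comm]

lemma gs_symm : ∀ i, (gs i)ᵀ = gs i := by
  intro i
  fin_cases i
  · exact stdT 0 0
  · exact stdT 1 1
  · exact stdT 2 2
  · exact stdT 3 3
  · show (Matrix.single 0 1 (1:ℝ) + Matrix.single 1 0 1)ᵀ
        = Matrix.single 0 1 (1:ℝ) + Matrix.single 1 0 1
    rw [Matrix.transpose_add, stdT, stdT, add_comm]
  · show (Matrix.single 0 2 (1:ℝ) + Matrix.single 2 0 1)ᵀ
        = Matrix.single 0 2 (1:ℝ) + Matrix.single 2 0 1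
    rw [Matrix.transpose_add, stdT, stdT, add_comm]
  · show (Matrix.single 0 3 (1:ℝ) + Matrix.single 3 0 1)ᵀ
        = Matrix.single 0 3 (1:ℝ) + Matrix.single 3 0 1
    rw [Matrix.transpose_add, stdT, stdT, add_comm]
  · show (Matrix.single 1 2 (1:ℝ) + Matrix.single 2 1 1)ᵀ
        = Matrix.single 1 2 (1:ℝ) + Matrix.single 2 1 1
    rw [Matrix.transpose_add, stdT, stdT, add_comm]
  · show (Matrix.single 1 3 (1:ℝ) + Matrix.single 3 1 1)ᵀ
        = Matrix.single 1 3 (1:ℝ) + Matrix.single 3 1 1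
    rw [Matrix.transpose_add, stdT, stdT, add_comm]
  · show (Matrix.single 2 3 (1:ℝ) + Matrix.single 3 2 1)ᵀ
        = Matrix.single 2 3 (1:ℝ) + Matrix.single 3 2 1
    rw [Matrix.transpose_add, stdT, stdT, add_comm]

set_option maxHeartbeats 1000000 in
lemma gs_indep : LinearIndependent ℝ gs := by
  rw [Fintype.linearIndependent_iff]
  intro c hc
  have h : ∀ r s : Fin 4, ∑ i : Fin 10, c i * gs i r s = 0 := by
    intro r s
    have := congrFun (congrFun hc r) s
    rw [Matrix.sum_apply] at this
    simpa [Matrix.smul_apply, smul_eq_mul] using this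
  intro i
  fin_cases i
  · simpa (config := { decide := true })
      [gs, Fin.sum_univ_succ, Matrix.single, Matrix.add_apply, Fin.ext_iff] using h 0 0
  · simpa (config := { decide := true })
      [gs, Fin.sum_univ_succ, Matrix.single, Matrix.add_apply, Fin.ext_iff] using h 1 1
  · simpa (config := { decide := true })
      [gs, Fin.sum_univ_succ, Matrix.single, Matrix.add_apply, Fin.ext_iff] using h 2 2
  · simpa (config := { decide := true })
      [gs, Fin.sum_univ_succ, Matrix.single, Matrix.add_apply, Fin.ext_iff] using h 3 3
  · simpa (config := { decide := true })
      [gs, Fin.sum_univ_succ, Matrix.single, Matrix.add_apply, Fin.ext_iff] using h 0 1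
  · simpa (config := { decide := true })
      [gs, Fin.sum_univ_succ, Matrix.single, Matrix.add_apply, Fin.ext_iff] using h 0 2
  · simpa (config := { decide := true })
      [gs, Fin.sum_univ_succ, Matrix.single, Matrix.add_apply, Fin.ext_iff] using h 0 3
  · simpa (config := { decide := true })
      [gs, Fin.sum_univ_succ, Matrix.single, Matrix.add_apply, Fin.ext_iff] using h 1 2
  · simpa (config := { decide := true })
      [gs, Fin.sum_univ_succ, Matrix.single, Matrix.add_apply, Fin.ext_iff] using h 1 3
  · simpa (config := { decide := true })
      [gs, Fin.sum_univ_succ, Matrix.single, Matrix.add_apply, Fin.ext_iff] using h 2 3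

lemma frob_pos (X : M4) (hX : X ≠ 0) : 0 < (Xᵀ * X).trace := by
  have key : (Xᵀ * X).trace = ∑ j, ∑ i, (X i j)^2 := by
    simp [Matrix.trace, Matrix.diag, Matrix.mul_apply, sq, Matrix.transpose_apply]
  rw [key]
  obtain ⟨i, j, hij⟩ : ∃ i j, X i j ≠ 0 := by
    by_contra hcon
    push_neg at hcon
    exact hX (by ext i j; simp [hcon])
  have h1 : (0:ℝ) < ∑ i', (X i' j)^2 :=
    lt_of_lt_of_le (by positivity)
      (Finset.single_le_sum (f := fun i' => (X i' j)^2) (fun _ _ => sq_nonneg _) (Finset.mem_univ i))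
  exact lt_of_lt_of_le h1
    (Finset.single_le_sum (f := fun j' => ∑ i', (X i' j')^2)
      (fun _ _ => Finset.sum_nonneg fun _ _ => sq_nonneg _) (Finset.mem_univ j))

theorem stmt_6 :
    ¬ ∃ A : Fin 5 → Matrix (Fin 4) (Fin 4) ℝ,
      (∀ i, A i * A i = 1) ∧
      (∀ i j, i ≠ j → A i * A j = -(A j * A i)) := by
  rintro ⟨A, h1, h2⟩
  have gram := gram_lemma (A 0) (A 1) (A 2) (A 3) (h1 0) (h1 1) (h1 2) (h1 3)
    (h2 1 0 (by decide)) (h2 2 0 (by decide)) (h2 3 0 (by decide))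
    (h2 2 1 (by decide)) (h2 3 1 (by decide)) (h2 3 2 (by decide))
  set f : Fin 7 → M4 :=
    ![A 0 * A 1, A 0 * A 2, A 0 * A 3, A 1 * A 2, A 1 * A 3, A 2 * A 3, A 0 * (A 1 * A 2)]
    with hf
  have findep : LinearIndependent ℝ f := by
    rw [Fintype.linearIndependent_iff]
    intro cc hcc j
    have h0 := congrArg (fun Y => (Y * f j).trace) hcc
    simp only [Finset.sum_mul, smul_mul_assoc, Matrix.trace_sum, Matrix.trace_smul, gram,
      zero_mul, Matrix.trace_zero, smul_ite, smul_zero, Finset.sum_ite_eq', Finset.mem_univ,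
      if_true, smul_eq_mul, mul_ite, mul_zero] at h0
    linarith
  set p := Submodule.span ℝ (Set.range f) with hp
  have hpdim : Module.finrank ℝ p = 7 := by
    rw [hp, finrank_span_eq_card findep]; simp
  have hneg : ∀ X ∈ p, X ≠ 0 → (X * X).trace < 0 := by
    intro X hX hX0
    obtain ⟨cc, hcc⟩ := (Submodule.mem_span_range_iff_exists_fun ℝ).mp hX
    have key : (X * X).trace = ∑ i, cc i * cc i * (-4) := by
      rw [← hcc]
      simp only [Finset.sum_mul, Finset.mul_sum, smul_mul_assoc, mul_smul_comm,
        Matrix.trace_sum, Matrix.trace_smul, gram, smul_ite, smul_zero, smul_eq_mul,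
        Finset.sum_ite_eq', Finset.mem_univ, if_true, mul_ite, mul_zero]
      exact Finset.sum_congr rfl fun i _ => by ring
    obtain ⟨i0, hi0⟩ : ∃ i, cc i ≠ 0 := by
      by_contra hcon
      push_neg at hcon
      exact hX0 (by rw [← hcc]; simp [hcon])
    rw [key]
    have hle : ∀ i ∈ Finset.univ, cc i * cc i * (-4) ≤ 0 := by
      intro i _; nlinarith [sq_nonneg (cc i)]
    have hstrict : cc i0 * cc i0 * (-4) < 0 := by nlinarith [mul_self_pos.mpr hi0]
    have hsum : ∑ i, cc i * cc i * (-4) < ∑ _i : Fin 7, (0:ℝ) :=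
      Finset.sum_lt_sum hle ⟨i0, Finset.mem_univ _, hstrict⟩
    simpa using hsum
  set q := Submodule.span ℝ (Set.range gs) with hq
  have hqdim : Module.finrank ℝ q = 10 := by
    rw [hq, finrank_span_eq_card gs_indep]; simp
  have hqsym : ∀ X ∈ q, Xᵀ = X := by
    intro X hX
    induction hX using Submodule.span_induction with
    | mem x hx => obtain ⟨i, rfl⟩ := hx; exact gs_symm i
    | zero => simp
    | add x y hx hy ihx ihy => rw [Matrix.transpose_add, ihx, ihy]
    | smul r x hx ih => rw [Matrix.transpose_smul, ih]
  have hdim := Submodule.finrank_sup_add_finrank_inf_eq p q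
  have hle16 : Module.finrank ℝ ↥(p ⊔ q) ≤ 16 := by
    have h := Submodule.finrank_le (p ⊔ q)
    have h16 : Module.finrank ℝ M4 = 16 := by
      simp [Module.finrank_matrix]
    omega
  have hpos : 0 < Module.finrank ℝ ↥(p ⊓ q) := by omega
  have : Nontrivial ↥(p ⊓ q) := Module.finrank_pos_iff.mp hpos
  obtain ⟨x, hxne⟩ := exists_ne (0 : ↥(p ⊓ q))
  have hX0 : (x : M4) ≠ 0 := fun h => hxne (Subtype.ext h)
  have hXp : (x : M4) ∈ p := (Submodule.mem_inf.mp x.2).1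
  have hXq : (x : M4) ∈ q := (Submodule.mem_inf.mp x.2).2
  have hlt := hneg x hXp hX0
  have hgt := frob_pos x hX0
  rw [hqsym x hXq] at hgt
  linarith
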